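/- arXiv:cs/0408003 — 2 statements merged into one kernel-verified Lean document; each statement's English description precedes it below -/
import Mathlib

section
/- Let G be a finite connected simple graph whose shortest-path metric dist_G has diameter Δ ≥ 1 (i.e., the maximum of dist_G over pairs of vertices equals Δ). If T is an ultrametric space and f : T → V(G) is a surjective map with d_T(u,v) ≥ dist_G(f(u), f(v)) for all u,v ∈ T, and f has path distortion at most α with respect to the metric dist_G, then α ≥ ((Δ+1)·log₂(Δ+1))/(2Δ). -/
/-- An ultrametric space: the distance satisfies the strong triangle inequality. -/
def IsUltrametricSpace (X : Type*) [MetricSpace X] : Prop :=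
  ∀ x y z : X, dist x z ≤ max (dist x y) (dist y z)

/-- The length of a path (finite sequence of points) in a metric space. -/
noncomputable def pathLength {X : Type*} [MetricSpace X] (p : List X) : ℝ :=
  (List.zipWith dist p p.tail).sum

/-- The length of a path of vertices of a graph `G` with respect to the shortest-path
metric `dist_G`. -/
noncomputable def graphPathLength {V : Type*} (G : SimpleGraph V) (p : List V) : ℝ :=
  (List.zipWith (fun a b => (G.dist a b : ℝ)) p p.tail).sum

/-- A multi-embedding `f : T → V(G)`, non-contractive for `dist_G`, has path distortion
at most `α` with respect to `dist_G`. -/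
def GraphPathDistortionLE {T V : Type*} [MetricSpace T] (G : SimpleGraph V)
    (f : T → V) (α : ℝ) : Prop :=
  ∀ p : List V, ∃ p' : List T, p'.map f = p ∧ pathLength p' ≤ α * graphPathLength G p

/-! ### Auxiliary lemmas -/

noncomputable def gfun (n : ℕ) : ℝ := ((n : ℝ) + 1) * Real.logb 2 ((n : ℝ) + 1) / 2

lemma gfun_zero : gfun 0 = 0 := by simp [gfun]

/-- Entropy-type inequality. -/
lemma log_entropy (x y : ℝ) (hx : 0 < x) (hy : 0 < y) :
    (x + y) * Real.log (x + y) ≤ x * Real.log x + y * Real.log y + (x + y) * Real.log 2 := by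
  have hs : 0 < x + y := by linarith
  have h1 : Real.log ((x + y) / (2 * x)) ≤ (x + y) / (2 * x) - 1 :=
    Real.log_le_sub_one_of_pos (by positivity)
  have h2 : Real.log ((x + y) / (2 * y)) ≤ (x + y) / (2 * y) - 1 :=
    Real.log_le_sub_one_of_pos (by positivity)
  have e1 : Real.log ((x + y) / (2 * x)) = Real.log (x + y) - (Real.log 2 + Real.log x) := by
    rw [Real.log_div hs.ne' (by positivity), Real.log_mul two_ne_zero hx.ne']
  have e2 : Real.log ((x + y) / (2 * y)) = Real.log (x + y) - (Real.log 2 + Real.log y) := by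
    rw [Real.log_div hs.ne' (by positivity), Real.log_mul two_ne_zero hy.ne']
  rw [e1] at h1
  rw [e2] at h2
  have hx1 : x * (Real.log (x + y) - (Real.log 2 + Real.log x)) ≤ (x + y) / 2 - x := by
    have := mul_le_mul_of_nonneg_left h1 hx.le
    have hrw : x * ((x + y) / (2 * x) - 1) = (x + y) / 2 - x := by
      field_simp
    linarith [hrw ▸ this]
  have hy1 : y * (Real.log (x + y) - (Real.log 2 + Real.log y)) ≤ (x + y) / 2 - y := by
    have := mul_le_mul_of_nonneg_left h2 hy.le
    have hrw : y * ((x + y) / (2 * y) - 1) = (x + y) / 2 - y := by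
      field_simp
    linarith [hrw ▸ this]
  nlinarith [hx1, hy1]

/-- The recursive inequality for `gfun`. -/
lemma gfun_split (a b : ℕ) : gfun (a + b + 1) ≤ ((a : ℝ) + (b : ℝ) + 1) + gfun a + gfun b := by
  set x : ℝ := (a : ℝ) + 1 with hxdef
  set y : ℝ := (b : ℝ) + 1 with hydef
  have hx : 1 ≤ x := by
    have : (0:ℝ) ≤ (a:ℝ) := Nat.cast_nonneg a
    simp only [hxdef]; linarith
  have hy : 1 ≤ y := by
    have : (0:ℝ) ≤ (b:ℝ) := Nat.cast_nonneg b
    simp only [hydef]; linarith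
  have hx0 : 0 < x := by linarith
  have hy0 : 0 < y := by linarith
  have hL : 0 < Real.log 2 := Real.log_pos one_lt_two
  have key := log_entropy x y hx0 hy0
  set A := Real.log (x + y)
  set B := Real.log x
  set C := Real.log y
  set L := Real.log 2
  have goal' : (x + y) * A ≤ 2 * L * (x + y - 1) + x * B + y * C := by nlinarith
  have hcast : gfun (a + b + 1) = (x + y) * (A / L) / 2 := by
    simp only [gfun, Real.logb, A, L]
    push_cast
    rw [hxdef, hydef]
    ring_nf
  have hga : gfun a = x * (B / L) / 2 := by
    simp only [gfun, Real.logb, B, L, hxdef]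
  have hgb : gfun b = y * (C / L) / 2 := by
    simp only [gfun, Real.logb, C, L, hydef]
  rw [hcast, hga, hgb]
  have hab : (a : ℝ) + (b : ℝ) + 1 = x + y - 1 := by simp [hxdef, hydef]; ring
  rw [hab]
  have expand : (x + y - 1) + x * (B / L) / 2 + y * (C / L) / 2 - (x + y) * (A / L) / 2
      = (2 * L * (x + y - 1) + x * B + y * C - (x + y) * A) / (2 * L) := by
    field_simp
  have h2 : 0 ≤ (2 * L * (x + y - 1) + x * B + y * C - (x + y) * A) / (2 * L) :=
    div_nonneg (by linarith) (by positivity)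
  linarith [expand ▸ h2]

/-- Key combinatorial lemma: if a sequence of positive reals has the property that
every window `[i, j)` contains an entry of size at least `j - i`, then the sum over
`range n` is at least `gfun n`. -/
lemma sum_lower : ∀ (n : ℕ) (d : ℕ → ℝ),
    (∀ i j : ℕ, i < j → j ≤ n → ∃ k, i ≤ k ∧ k < j ∧ ((j : ℝ) - (i : ℝ)) ≤ d k) →
    gfun n ≤ ∑ k ∈ Finset.range n, d k := by
  intro n
  induction n using Nat.strong_induction_on with
  | _ n IH =>
    intro d h
    rcases Nat.eq_zero_or_pos n with h0 | hpos
    · subst h0; simp [gfun_zero]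
    · obtain ⟨k, hk0, hkn, hdk⟩ := h 0 n hpos (le_refl n)
      have hdk' : (n : ℝ) ≤ d k := by simpa using hdk
      have IH1 : gfun k ≤ ∑ i ∈ Finset.range k, d i :=
        IH k hkn d (fun i j hij hj => h i j hij (hj.trans hkn.le))
      set m := n - 1 - k with hm
      have hmn : m < n := by omega
      have IH2 : gfun m ≤ ∑ i ∈ Finset.range m, d (k + 1 + i) := by
        refine IH m hmn (fun i => d (k + 1 + i)) ?_
        intro i j hij hj
        obtain ⟨k', h1, h2, h3⟩ := h (k + 1 + i) (k + 1 + j) (by omega) (by omega)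
        refine ⟨k' - (k + 1), by omega, by omega, ?_⟩
        have hk' : k + 1 + (k' - (k + 1)) = k' := by omega
        show ((j : ℝ) - (i : ℝ)) ≤ d (k + 1 + (k' - (k + 1)))
        rw [hk']
        push_cast at h3
        linarith
      have hsum : ∑ i ∈ Finset.range n, d i
          = ((∑ i ∈ Finset.range k, d i) + d k) + ∑ i ∈ Finset.range m, d (k + 1 + i) := by
        rw [show n = (k + 1) + m from by omega, Finset.sum_range_add, Finset.sum_range_succ]
      have hkey : gfun n ≤ (n : ℝ) + gfun k + gfun m := by
        have hg := gfun_split k m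
        rw [show k + m + 1 = n from by omega] at hg
        have hc : (k : ℝ) + (m : ℝ) + 1 = (n : ℝ) := by
          have : k + m + 1 = n := by omega
          exact_mod_cast congrArg (Nat.cast : ℕ → ℝ) this
        linarith
      linarith

/-- In an ultrametric space, the distance between endpoints of a chain is at most
some consecutive distance. -/
lemma ultra_chain {T : Type*} [MetricSpace T] (hT : IsUltrametricSpace T) (u : ℕ → T) :
    ∀ (m i : ℕ), ∃ k, i ≤ k ∧ k < i + m + 1 ∧
      dist (u i) (u (i + m + 1)) ≤ dist (u k) (u (k + 1)) := by
  intro m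
  induction m with
  | zero => intro i; exact ⟨i, le_refl i, by omega, by norm_num⟩
  | succ m ih =>
    intro i
    have h := hT (u i) (u (i + m + 1)) (u (i + (m + 1) + 1))
    rcases le_max_iff.mp h with h' | h'
    · obtain ⟨k, h1, h2, h3⟩ := ih i
      exact ⟨k, h1, by omega, le_trans h' h3⟩
    · refine ⟨i + m + 1, by omega, by omega, ?_⟩
      exact h'

/-- Every list is the map of `getD` over its range. -/
lemma list_eq_map_range {X : Type*} (x0 : X) :
    ∀ l : List X, l = (List.range l.length).map (fun i => l.getD i x0) := by
  intro l
  induction l with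
  | nil => simp
  | cons a l ih =>
    have h1 : (List.range (a :: l).length).map (fun i => (a :: l).getD i x0)
        = a :: (List.range l.length).map (fun i => l.getD i x0) := by
      simp only [List.length_cons, List.range_succ_eq_map, List.map_cons, List.map_map]
      simp [Function.comp]
    rw [h1, ← ih]

/-- The sum of `F` along consecutive pairs of a mapped range. -/
lemma zip_sum {X : Type*} (F : X → X → ℝ) :
    ∀ (m : ℕ) (v : ℕ → X),
      (List.zipWith F ((List.range (m + 1)).map v) (((List.range (m + 1)).map v).tail)).sum
        = ∑ i ∈ Finset.range m, F (v i) (v (i + 1)) := by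
  intro m
  induction m with
  | zero => intro v; simp [List.range_succ]
  | succ m ih =>
    intro v
    have hexp : ∀ (n : ℕ) (w : ℕ → X), (List.range (n + 1)).map w
        = w 0 :: (List.range n).map (fun i => w (i + 1)) := by
      intro n w
      rw [List.range_succ_eq_map]
      simp [List.map_map, Function.comp]
    rw [hexp (m + 1) v, hexp m (fun i => v (i + 1))]
    simp only [List.tail_cons, List.zipWith_cons_cons, List.sum_cons]
    have := ih (fun i => v (i + 1))
    rw [hexp m (fun i => v (i + 1))] at this
    simp only [List.tail_cons] at this
    rw [this]
    rw [Finset.sum_range_succ']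
    exact add_comm _ _

/-- Lower bound: any surjective non-contractive multi-embedding of the shortest-path
metric of a finite connected graph of diameter `Δ ≥ 1` into an ultrametric space has
path distortion at least `(Δ+1)·log₂(Δ+1) / (2Δ)`. -/
theorem graph_path_embedding_ultrametric_lower_bound
    {V : Type*} [Fintype V] (G : SimpleGraph V) (hG : G.Connected)
    (Δ : ℕ) (hΔ : 1 ≤ Δ)
    (hdiam_le : ∀ a b : V, G.dist a b ≤ Δ)
    (hdiam_eq : ∃ a b : V, G.dist a b = Δ)
    (T : Type*) [MetricSpace T] (hT : IsUltrametricSpace T)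
    (f : T → V) (α : ℝ)
    (hsurj : Function.Surjective f)
    (hnc : ∀ u v : T, (G.dist (f u) (f v) : ℝ) ≤ dist u v)
    (hpd : GraphPathDistortionLE G f α) :
    ((Δ : ℝ) + 1) * Real.logb 2 ((Δ : ℝ) + 1) / (2 * (Δ : ℝ)) ≤ α := by
  classical
  obtain ⟨a, b, hab⟩ := hdiam_eq
  obtain ⟨w, hw⟩ := (hG.preconnected a b).exists_walk_length_eq_dist
  rw [hab] at hw
  set v : ℕ → V := fun i => w.getVert i with hv
  have hv0 : v 0 = a := w.getVert_zero
  have hvΔ : v Δ = b := by rw [hv]; simp only [← hw]; exact w.getVert_length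
  -- upper bound on distances along the walk
  have hupper : ∀ (m i : ℕ), i + m ≤ Δ → G.dist (v i) (v (i + m)) ≤ m := by
    intro m
    induction m with
    | zero => intro i _; simp
    | succ m ihm =>
      intro i hi
      have h1 : G.dist (v i) (v (i + m)) ≤ m := ihm i (by omega)
      have hadj : G.Adj (v (i + m)) (v (i + m + 1)) := by
        apply w.adj_getVert_succ
        omega
      have h2 : G.dist (v (i + m)) (v (i + m + 1)) ≤ 1 := by
        have := SimpleGraph.dist_le (SimpleGraph.Walk.cons hadj SimpleGraph.Walk.nil)
        simpa using this
      calc G.dist (v i) (v (i + (m + 1)))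
          ≤ G.dist (v i) (v (i + m)) + G.dist (v (i + m)) (v (i + m + 1)) := by
            rw [show i + (m + 1) = i + m + 1 from by omega]
            exact hG.dist_triangle
        _ ≤ m + 1 := by omega
  have heq : ∀ i j : ℕ, i ≤ j → j ≤ Δ → G.dist (v i) (v j) = j - i := by
    intro i j hij hj
    have h1 : G.dist (v i) (v j) ≤ j - i := by
      have := hupper (j - i) i (by omega)
      rwa [show i + (j - i) = j from by omega] at this
    have h2 : G.dist a (v i) ≤ i := by
      have := hupper i 0 (by omega)
      simpa [hv0] using this
    have h3 : G.dist (v j) b ≤ Δ - j := by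
      have := hupper (Δ - j) j (by omega)
      rwa [show j + (Δ - j) = Δ from by omega, hvΔ] at this
    have h4 : Δ ≤ G.dist a (v i) + (G.dist (v i) (v j) + G.dist (v j) b) := by
      calc Δ = G.dist a b := hab.symm
        _ ≤ G.dist a (v j) + G.dist (v j) b := hG.dist_triangle
        _ ≤ (G.dist a (v i) + G.dist (v i) (v j)) + G.dist (v j) b := by
            have := hG.dist_triangle (u := a) (v := v i) (w := v j)
            omega
        _ = G.dist a (v i) + (G.dist (v i) (v j) + G.dist (v j) b) := by omega
    omega
  -- the path in the graph
  set p : List V := (List.range (Δ + 1)).map v with hp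
  obtain ⟨p', hmap, hlen⟩ := hpd p
  have hplen : p.length = Δ + 1 := by simp [hp]
  have hp'len : p'.length = Δ + 1 := by
    have := congrArg List.length hmap
    simpa [hplen] using this
  obtain ⟨t0, -⟩ := hsurj a
  set u : ℕ → T := fun i => p'.getD i t0 with hu
  have hp' : p' = (List.range (Δ + 1)).map u := by
    conv_lhs => rw [list_eq_map_range t0 p']
    rw [hp'len]
  -- relate f ∘ u to v
  have hfu : ∀ i, i < Δ + 1 → f (u i) = v i := by
    have hmm : (List.range (Δ + 1)).map (fun i => f (u i)) = (List.range (Δ + 1)).map v := by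
      have : ((List.range (Δ + 1)).map u).map f = p := by rw [← hp']; exact hmap
      rw [List.map_map] at this
      rw [hp] at this
      exact this
    intro i hi
    have := List.map_inj_left.mp hmm i (List.mem_range.mpr hi)
    exact this
  -- length computations
  have hgpl : graphPathLength G p = (Δ : ℝ) := by
    rw [hp, graphPathLength, zip_sum (fun a b => (G.dist a b : ℝ)) Δ v]
    have : ∀ i ∈ Finset.range Δ, (G.dist (v i) (v (i + 1)) : ℝ) = 1 := by
      intro i hi
      rw [Finset.mem_range] at hi
      rw [heq i (i + 1) (by omega) (by omega)]
      simp
    rw [Finset.sum_congr rfl this]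
    simp
  have hpl : pathLength p' = ∑ i ∈ Finset.range Δ, dist (u i) (u (i + 1)) := by
    rw [hp', pathLength, zip_sum dist Δ u]
  -- the window property
  have hwin : ∀ i j : ℕ, i < j → j ≤ Δ →
      ∃ k, i ≤ k ∧ k < j ∧ ((j : ℝ) - (i : ℝ)) ≤ dist (u k) (u (k + 1)) := by
    intro i j hij hj
    obtain ⟨k, h1, h2, h3⟩ := ultra_chain hT u (j - i - 1) i
    rw [show i + (j - i - 1) + 1 = j from by omega] at h2 h3
    refine ⟨k, h1, h2, ?_⟩
    have hd1 : (G.dist (f (u i)) (f (u j)) : ℝ) ≤ dist (u i) (u j) := hnc _ _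
    rw [hfu i (by omega), hfu j (by omega), heq i j hij.le hj] at hd1
    have hcast : ((j - i : ℕ) : ℝ) = (j : ℝ) - (i : ℝ) := by
      push_cast [Nat.cast_sub hij.le]
      ring
    rw [hcast] at hd1
    linarith
  have hmain : gfun Δ ≤ ∑ i ∈ Finset.range Δ, dist (u i) (u (i + 1)) :=
    sum_lower Δ (fun i => dist (u i) (u (i + 1))) hwin
  have hfinal : gfun Δ ≤ α * Δ := by
    rw [← hpl] at hmain
    rw [hgpl] at hlen
    linarith
  have hΔpos : (0 : ℝ) < (Δ : ℝ) := by exact_mod_cast hΔ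
  rw [div_le_iff₀ (by positivity)]
  have h1 : gfun Δ = ((Δ : ℝ) + 1) * Real.logb 2 ((Δ : ℝ) + 1) / 2 := rfl
  have h2 : α * (2 * (Δ : ℝ)) = 2 * (α * (Δ : ℝ)) := by ring
  linarith
end

section
/- Let f : N → M be a surjective non-contractive multi-embedding of a metric space M in a metric space N with path distortion at most α, where α ≥ 1. Let s₀' ∈ N and suppose A_N is a deterministic online algorithm on N with initial state s₀' that is r-competitive with additive constant c, i.e., cost_{A_N}(σ') ≤ r·Opt_N(σ') + c for every finite task sequence σ' on N. Define the online algorithm A on M with initial state f(s₀') by A(τ_1,…,τ_i) = f(A_N(τ_1∘f,…,τ_i∘f)). Then cost_A(σ) ≤ α·r·Opt_M(σ) + c for every finite task sequence σ on M. -/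
open ENNReal

/-- A multi-embedding `f : N → M` (a surjective map) is non-contractive if
distances in `N` dominate the distances of the images in `M`. -/
def NonContractive {N M : Type*} [MetricSpace N] [MetricSpace M] (f : N → M) : Prop :=
  ∀ u v : N, dist (f u) (f v) ≤ dist u v

/-- A non-contractive multi-embedding `f : N → M` has path distortion at most `α`. -/
def PathDistortionLE {N M : Type*} [MetricSpace N] [MetricSpace M] (f : N → M) (α : ℝ) : Prop :=
  ∀ p : List M, ∃ p' : List N, p'.map f = p ∧ pathLength p' ≤ α * pathLength p

/-- The optimal offline cost of serving the task sequence `σ` in the metrical task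
system on `S` (the initial state is unconstrained). -/
noncomputable def mtsOpt {S : Type*} [MetricSpace S] (σ : List (S → ℝ≥0∞)) : ℝ≥0∞ :=
  ⨅ s : Fin (σ.length + 1) → S,
    ∑ i : Fin σ.length, (edist (s i.castSucc) (s i.succ) + σ.get i (s i.succ))

/-- The cost of a deterministic online algorithm `A` (a function from finite task
sequences to states, with `A ⟨⟩` the initial state) on the task sequence `σ`:
the sum over `i` of the movement cost from `A(τ_1,…,τ_{i-1})` to `A(τ_1,…,τ_i)` plus the
service cost `τ_i(A(τ_1,…,τ_i))`. -/
noncomputable def mtsAlgCost {S : Type*} [MetricSpace S]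
    (A : List (S → ℝ≥0∞) → S) (σ : List (S → ℝ≥0∞)) : ℝ≥0∞ :=
  ∑ i : Fin σ.length,
    (edist (A (σ.take i.val)) (A (σ.take (i.val + 1))) + σ.get i (A (σ.take (i.val + 1))))

lemma pathLength_eq_sum {X : Type*} [MetricSpace X] {m : ℕ} (p : List X) (h : p.length = m + 1) :
    pathLength p = ∑ i : Fin m, dist (p[(i : ℕ)]'(by omega)) (p[(i : ℕ)+1]'(by omega)) := by
  have hz : List.zipWith dist p p.tail =
      List.ofFn (fun i : Fin m => dist (p[(i : ℕ)]'(by omega)) (p[(i : ℕ)+1]'(by omega))) := by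
    apply List.ext_getElem
    · simp [List.length_zipWith, h]
    · intro n h1 h2
      simp only [List.getElem_zipWith, List.getElem_ofFn, List.getElem_tail]
  rw [pathLength, hz, List.sum_ofFn]

lemma edist_sum_eq {X : Type*} [MetricSpace X] {m : ℕ} (p : List X) (h : p.length = m + 1) :
    ∑ i : Fin m, edist (p[(i : ℕ)]'(by omega)) (p[(i : ℕ)+1]'(by omega))
      = ENNReal.ofReal (pathLength p) := by
  rw [pathLength_eq_sum p h, ENNReal.ofReal_sum_of_nonneg (fun i _ => dist_nonneg)]
  exact Finset.sum_congr rfl fun i _ => by rw [edist_dist]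

lemma fin_sum_cast {β : Type*} [AddCommMonoid β] {n m : ℕ} (h : n = m) (F : Fin m → β) :
    ∑ i : Fin m, F i = ∑ i : Fin n, F (Fin.cast h i) := by subst h; rfl

/-- Proposition 5: if `f : N → M` is a surjective non-contractive multi-embedding with
path distortion at most `α ≥ 1` and `A_N` is an online algorithm on `N` (with initial
state `s₀' = A_N ⟨⟩`) that is `r`-competitive with additive constant `c`, then the online
algorithm `A` on `M` defined by `A(τ_1,…,τ_i) = f(A_N(τ_1∘f,…,τ_i∘f))` (with initial
state `f(s₀')`) satisfies `cost_A(σ) ≤ α·r·Opt_M(σ) + c` for every task sequence `σ`. -/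
theorem mts_competitive_of_pathDistortion
    {M N : Type*} [MetricSpace M] [MetricSpace N]
    (f : N → M) (α : ℝ) (hα : 1 ≤ α)
    (hsurj : Function.Surjective f)
    (hnc : NonContractive f)
    (hpd : PathDistortionLE f α)
    (AN : List (N → ℝ≥0∞) → N) (s₀' : N) (hinit : AN [] = s₀')
    (r c : ℝ≥0∞)
    (hcomp : ∀ σ' : List (N → ℝ≥0∞), mtsAlgCost AN σ' ≤ r * mtsOpt σ' + c)
    (σ : List (M → ℝ≥0∞)) :
    mtsAlgCost (fun τs => f (AN (τs.map (fun τ => τ ∘ f)))) σ ≤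
      ENNReal.ofReal α * r * mtsOpt σ + c := by
  set g : (M → ℝ≥0∞) → (N → ℝ≥0∞) := fun τ => τ ∘ f with hg
  set σ' : List (N → ℝ≥0∞) := σ.map g with hσ'
  have hlen : σ.length = σ'.length := (List.length_map g).symm
  set a : ℝ≥0∞ := ENNReal.ofReal α with ha
  have ha1 : 1 ≤ a := ENNReal.one_le_ofReal.mpr hα
  have ha0 : a ≠ 0 := by positivity
  have hat : a ≠ ∞ := ENNReal.ofReal_ne_top
  -- Step 1: online cost on M bounded by online cost on N
  have step1 : mtsAlgCost (fun τs => f (AN (τs.map g))) σ ≤ mtsAlgCost AN σ' := by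
    rw [mtsAlgCost, mtsAlgCost, fin_sum_cast hlen]
    apply Finset.sum_le_sum
    intro i _
    have htake : ∀ k, (σ.take k).map g = σ'.take k := by
      intro k; rw [hσ', List.map_take]
    simp only [htake]
    have hget : σ'.get (Fin.cast hlen i) = g (σ.get i) := by
      simp [hσ', List.getElem_map]
    rw [hget]
    refine add_le_add ?_ (le_of_eq rfl)
    rw [edist_dist, edist_dist]
    exact ENNReal.ofReal_le_ofReal (hnc _ _)
  -- Step 3: opt on N bounded by α * opt on M
  have step3 : mtsOpt σ' ≤ a * mtsOpt σ := by
    rw [show mtsOpt σ = ⨅ s : Fin (σ.length + 1) → M,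
        ∑ i : Fin σ.length, (edist (s i.castSucc) (s i.succ) + σ.get i (s i.succ)) from rfl,
      ENNReal.mul_iInf_of_ne ha0 hat]
    refine le_iInf fun s => ?_
    obtain ⟨p', hmap, hplen⟩ := hpd (List.ofFn s)
    have hp'len : p'.length = σ.length + 1 := by
      have := congrArg List.length hmap; simpa using this
    have hfp : ∀ (j : ℕ) (hj : j < σ.length + 1), f (p'[j]'(by omega)) = s ⟨j, hj⟩ := by
      intro j hj
      have : (p'.map f)[j]'(by simp [hp'len]; omega) = (List.ofFn s)[j]'(by simp; omega) := by
        simp_rw [hmap]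
      simpa only [List.getElem_map, List.getElem_ofFn] using this
    set s' : Fin (σ'.length + 1) → N := fun i => p'[(i : ℕ)]'(by omega) with hs'
    refine le_trans (iInf_le _ s') ?_
    rw [fin_sum_cast hlen]
    have hterm : ∀ i : Fin σ.length,
        edist (s' ((Fin.cast hlen i).castSucc)) (s' ((Fin.cast hlen i).succ))
          + σ'.get (Fin.cast hlen i) (s' ((Fin.cast hlen i).succ))
        = edist (p'[(i : ℕ)]'(by omega)) (p'[(i : ℕ)+1]'(by omega)) + σ.get i (s i.succ) := by
      intro i
      have h1 : s' ((Fin.cast hlen i).castSucc) = p'[(i : ℕ)]'(by omega) := rfl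
      have h2 : s' ((Fin.cast hlen i).succ) = p'[(i : ℕ)+1]'(by omega) := rfl
      have hget : σ'.get (Fin.cast hlen i) = g (σ.get i) := by
        simp [hσ', List.getElem_map]
      rw [h1, h2, hget]
      congr 1
      show σ.get i (f (p'[(i : ℕ)+1]'(by omega))) = σ.get i (s i.succ)
      rw [hfp ((i : ℕ)+1) (by omega)]
      rfl
    refine le_trans (le_of_eq (Finset.sum_congr rfl fun i _ => hterm i)) ?_
    rw [Finset.sum_add_distrib]
    have hmove : ∑ i : Fin σ.length, edist (p'[(i : ℕ)]'(by omega)) (p'[(i : ℕ)+1]'(by omega))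
        ≤ a * ∑ i : Fin σ.length, edist (s i.castSucc) (s i.succ) := by
      rw [edist_sum_eq p' hp'len]
      have hofn : ∑ i : Fin σ.length, edist (s i.castSucc) (s i.succ)
          = ENNReal.ofReal (pathLength (List.ofFn s)) := by
        rw [← edist_sum_eq (m := σ.length) (List.ofFn s) (by simp)]
        refine Finset.sum_congr rfl fun i _ => ?_
        simp only [List.getElem_ofFn]
        exact congrArg₂ edist (congrArg s (Fin.ext rfl)) (congrArg s (Fin.ext rfl))
      rw [hofn, ← ENNReal.ofReal_mul (by linarith)]
      exact ENNReal.ofReal_le_ofReal hplen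
    calc (∑ i : Fin σ.length, edist (p'[(i : ℕ)]'(by omega)) (p'[(i : ℕ)+1]'(by omega)))
          + ∑ i : Fin σ.length, σ.get i (s i.succ)
        ≤ a * (∑ i : Fin σ.length, edist (s i.castSucc) (s i.succ))
          + a * ∑ i : Fin σ.length, σ.get i (s i.succ) := by
          exact add_le_add hmove (le_mul_of_one_le_left zero_le' ha1)
      _ = a * ∑ i : Fin σ.length, (edist (s i.castSucc) (s i.succ) + σ.get i (s i.succ)) := by
          rw [← mul_add, Finset.sum_add_distrib]
  calc mtsAlgCost (fun τs => f (AN (τs.map g))) σ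
      ≤ r * mtsOpt σ' + c := le_trans step1 (hcomp σ')
    _ ≤ r * (a * mtsOpt σ) + c := by gcongr
    _ = a * r * mtsOpt σ + c := by ring_nf
end
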